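/- Let F be a field and n ≥ 2. The map f : GC_n(F) → (ℤ/nℤ)^× sending an invertible Christoffel matrix to its type is a surjective group homomorphism whose kernel H consists of the invertible Christoffel matrices of type 1 (which are exactly the invertible matrices aI + b(J − I) with a ≠ b, J the all-ones matrix). Hence GC_n(F)/H ≅ (ℤ/nℤ)^×. -/

import Mathlib

/-- The `n × n` Christoffel matrix `C_m(a,b)`. -/
def christoffel (n m : ℕ) {R : Type*} (a b : R) : Matrix (Fin n) (Fin n) R :=
  Matrix.of fun i j =>
    if (((i : ℕ) : ZMod n) - (m : ZMod n) * ((j : ℕ) : ZMod n)).val < m then a else b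

/-- A matrix is a Christoffel matrix if it equals `C_m(a,b)` for some `m` coprime to `n`
and distinct `a, b`. -/
def IsChristoffel {R : Type*} (n : ℕ) (M : Matrix (Fin n) (Fin n) R) : Prop :=
  ∃ (m : ℕ) (a b : R), 1 ≤ m ∧ m < n ∧ Nat.Coprime m n ∧ a ≠ b ∧ M = christoffel n m a b

section Aux

lemma zmod_sub_val_lt_iff {n m : ℕ} (hn : 0 < n) (hm : m ≤ n) (t : ZMod n) (c : ℕ) :
    (t - (c : ZMod n)).val < m ↔ ∃ q : ℕ, c ≤ t.val + q * n ∧ t.val + q * n < c + m := by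
  haveI : NeZero n := ⟨hn.ne'⟩
  constructor
  · intro h
    set r := (t - (c : ZMod n)).val with hr
    have hcast : ((c + r : ℕ) : ZMod n) = t := by
      push_cast
      rw [hr]
      simp [ZMod.natCast_val, ZMod.cast_id]
    have h2 : (c + r) % n = t.val := by
      rw [← ZMod.val_natCast, hcast]
    have h3 := Nat.mod_add_div (c + r) n
    have h4 : (c + r) / n * n = n * ((c + r) / n) := Nat.mul_comm _ _
    exact ⟨(c + r) / n, by omega, by omega⟩
  · rintro ⟨q, h1, h2⟩
    have hr' : t.val + q * n - c < n := by omega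
    have : ((t.val + q * n - c : ℕ) : ZMod n) = t - (c : ZMod n) := by
      have : ((t.val + q * n - c : ℕ) : ZMod n) = ((t.val + q*n : ℕ) : ZMod n) - (c : ZMod n) := by
        rw [Nat.cast_sub h1]
      rw [this]
      push_cast
      simp [ZMod.natCast_val, ZMod.cast_id, ZMod.natCast_self]
    rw [← this, ZMod.val_cast_of_lt hr']
    omega

lemma count_lemma {n m m' : ℕ} (hm : 1 ≤ m) (hmn : m < n) (hm' : 1 ≤ m') (t : ZMod n) :
    ((Finset.range m').filter fun s => (t - ((m * s : ℕ) : ZMod n)).val < m).card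
      = m * m' / n + if t.val < m * m' % n then 1 else 0 := by
  have hn : 0 < n := by omega
  haveI : NeZero n := ⟨hn.ne'⟩
  set u := m * m' / n with hu
  set v := m * m' % n with hv
  have huv : n * u + v = m * m' := Nat.div_add_mod _ _
  have hvn : v < n := Nat.mod_lt _ hn
  have htn : t.val < n := ZMod.val_lt t
  rw [← Finset.card_range (u + if t.val < v then 1 else 0)]
  symm
  apply Finset.card_bij (fun q _ => (t.val + q * n) / m)
  · intro q hq
    rw [Finset.mem_range] at hq
    have hw : t.val + q * n < m * m' := by
      split_ifs at hq with htv
      · have h1 : q * n ≤ u * n := Nat.mul_le_mul_right n (by omega)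
        have h2 : u * n = n * u := mul_comm _ _
        linarith
      · have h1 : (q + 1) * n ≤ u * n := Nat.mul_le_mul_right n (by omega)
        have h2 : u * n = n * u := mul_comm _ _
        nlinarith
    rw [Finset.mem_filter, Finset.mem_range]
    refine ⟨Nat.div_lt_of_lt_mul hw, ?_⟩
    rw [zmod_sub_val_lt_iff hn hmn.le]
    refine ⟨q, Nat.mul_div_le _ m, ?_⟩
    have h1 := Nat.div_add_mod (t.val + q * n) m
    have h2 := Nat.mod_lt (t.val + q * n) (show 0 < m by omega)
    omega
  · intro q₁ h₁ q₂ h₂ heq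
    have key : ∀ p₁ p₂ : ℕ, p₁ < p₂ → (t.val + p₁ * n) / m < (t.val + p₂ * n) / m := by
      intro p₁ p₂ hp
      have h1 : t.val + p₁ * n + m ≤ t.val + p₂ * n := by
        have h2 : (p₁ + 1) * n ≤ p₂ * n := Nat.mul_le_mul_right n (by omega)
        nlinarith
      calc (t.val + p₁ * n) / m < (t.val + p₁ * n) / m + 1 := Nat.lt_succ_self _
        _ = (t.val + p₁ * n + m) / m := (Nat.add_div_right _ (by omega)).symm
        _ ≤ (t.val + p₂ * n) / m := Nat.div_le_div_right h1
    rcases lt_trichotomy q₁ q₂ with h | h | h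
    · exact absurd heq (Nat.ne_of_lt (key _ _ h))
    · exact h
    · exact absurd heq.symm (Nat.ne_of_lt (key _ _ h))
  · intro s hs
    rw [Finset.mem_filter, Finset.mem_range] at hs
    obtain ⟨hs1, hs2⟩ := hs
    rw [zmod_sub_val_lt_iff hn hmn.le] at hs2
    obtain ⟨q, hq1, hq2⟩ := hs2
    have hw : t.val + q * n < m * m' := by
      have h2 : m * (s + 1) ≤ m * m' := Nat.mul_le_mul_left m (by omega)
      linarith
    refine ⟨q, Finset.mem_range.mpr ?_, ?_⟩
    · by_contra hcon
      push_neg at hcon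
      split_ifs at hcon with htv
      · have h1 : (u + 1) * n ≤ q * n := Nat.mul_le_mul_right n (by omega)
        nlinarith
      · have h1 : u * n ≤ q * n := Nat.mul_le_mul_right n (by omega)
        have h2 : u * n = n * u := mul_comm _ _
        linarith
    · exact Nat.div_eq_of_lt_le (by linarith) (by nlinarith)

lemma fin_cast_val {n : ℕ} [NeZero n] (k : Fin n) : (((k : ℕ) : ZMod n)).val = (k : ℕ) :=
  ZMod.val_cast_of_lt k.isLt

lemma zmod_cast_val {n : ℕ} [NeZero n] (a : ZMod n) : ((a.val : ℕ) : ZMod n) = a := by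
  simp [ZMod.natCast_val, ZMod.cast_id]

lemma fin_cast_inj {n : ℕ} [NeZero n] {k₁ k₂ : Fin n}
    (h : ((k₁ : ℕ) : ZMod n) = ((k₂ : ℕ) : ZMod n)) : k₁ = k₂ := by
  apply Fin.ext
  have := congrArg ZMod.val h
  rwa [fin_cast_val, fin_cast_val] at this

lemma card_row {n m : ℕ} (hm : 1 ≤ m) (hmn : m < n) (x : ZMod n) :
    (Finset.univ.filter fun k : Fin n =>
      (x - (m : ZMod n) * ((k : ℕ) : ZMod n)).val < m).card = m := by
  haveI : NeZero n := ⟨by omega⟩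
  have key := count_lemma (m' := n) hm hmn (by omega) x
  rw [Nat.mul_div_cancel _ (by omega : 0 < n), Nat.mul_mod_left] at key
  simp only [Nat.not_lt_zero, if_false, add_zero] at key
  have key2 : (Finset.univ.filter fun k : Fin n =>
      (x - (m : ZMod n) * ((k : ℕ) : ZMod n)).val < m).card
      = ((Finset.range n).filter fun s => (x - ((m * s : ℕ) : ZMod n)).val < m).card := by
    apply Finset.card_bij (fun (k : Fin n) _ => (k : ℕ))
    · intro k hk
      rw [Finset.mem_filter] at hk ⊢
      refine ⟨Finset.mem_range.mpr k.isLt, ?_⟩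
      have : ((m * (k : ℕ) : ℕ) : ZMod n) = (m : ZMod n) * ((k : ℕ) : ZMod n) := by
        push_cast; ring
      rw [this]
      exact hk.2
    · intro k₁ _ k₂ _ heq
      exact Fin.ext heq
    · intro s hs
      rw [Finset.mem_filter, Finset.mem_range] at hs
      refine ⟨⟨s, hs.1⟩, ?_, rfl⟩
      rw [Finset.mem_filter]
      refine ⟨Finset.mem_univ _, ?_⟩
      have : ((m * s : ℕ) : ZMod n) = (m : ZMod n) * ((s : ℕ) : ZMod n) := by push_cast; ring
      rw [← this]
      exact hs.2
  rw [key2, key]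

lemma card_col {n m' : ℕ} (hm' : 1 ≤ m') (hm'n : m' < n) (c : ZMod n) :
    (Finset.univ.filter fun k : Fin n => (((k : ℕ) : ZMod n) - c).val < m').card = m' := by
  haveI : NeZero n := ⟨by omega⟩
  have key : (Finset.range m').card =
      (Finset.univ.filter fun k : Fin n => (((k : ℕ) : ZMod n) - c).val < m').card := by
    apply Finset.card_bij (fun r _ => (⟨(c + (r : ℕ)).val, ZMod.val_lt _⟩ : Fin n))
    · intro r hr
      rw [Finset.mem_range] at hr
      rw [Finset.mem_filter]
      refine ⟨Finset.mem_univ _, ?_⟩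
      show (((((c + (r : ℕ)).val : ℕ)) : ZMod n) - c).val < m'
      rw [zmod_cast_val]
      simp only [add_sub_cancel_left]
      rw [ZMod.val_cast_of_lt (by omega)]
      exact hr
    · intro r₁ h₁ r₂ h₂ heq
      rw [Finset.mem_range] at h₁ h₂
      have h3 := congrArg (fun k : Fin n => ((k : ℕ) : ZMod n)) heq
      simp only [zmod_cast_val] at h3
      have h4 : ((r₁ : ℕ) : ZMod n) = ((r₂ : ℕ) : ZMod n) := add_left_cancel h3
      have h5 := congrArg ZMod.val h4
      rwa [ZMod.val_cast_of_lt (by omega), ZMod.val_cast_of_lt (by omega)] at h5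
    · intro k hk
      rw [Finset.mem_filter] at hk
      refine ⟨(((k : ℕ) : ZMod n) - c).val, Finset.mem_range.mpr hk.2, ?_⟩
      apply fin_cast_inj
      show (((c + ((((k : ℕ) : ZMod n) - c).val : ℕ) : ZMod n).val : ℕ) : ZMod n) = _
      rw [zmod_cast_val, zmod_cast_val]
      ring
  rw [← key, Finset.card_range]

lemma card_pq {n m m' : ℕ} (hm : 1 ≤ m) (hmn : m < n) (hm' : 1 ≤ m') (hm'n : m' < n)
    (x c : ZMod n) :
    (Finset.univ.filter fun k : Fin n =>
      (x - (m : ZMod n) * ((k : ℕ) : ZMod n)).val < m ∧ (((k : ℕ) : ZMod n) - c).val < m').card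
      = m * m' / n + if (x - (m : ZMod n) * c).val < m * m' % n then 1 else 0 := by
  haveI : NeZero n := ⟨by omega⟩
  have key := count_lemma hm hmn hm' (x - (m : ZMod n) * c)
  rw [← key]
  apply Finset.card_bij
    (fun (k : Fin n) _ => ((((k : ℕ) : ZMod n) - c).val))
  · intro k hk
    rw [Finset.mem_filter] at hk
    obtain ⟨-, h1, h2⟩ := hk
    rw [Finset.mem_filter, Finset.mem_range]
    refine ⟨h2, ?_⟩
    have hc : ((m * (((k : ℕ) : ZMod n) - c).val : ℕ) : ZMod n)
        = (m : ZMod n) * (((k : ℕ) : ZMod n) - c) := by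
      push_cast [zmod_cast_val]
      ring
    rw [hc]
    have : x - (m : ZMod n) * c - ((m : ZMod n) * (((k : ℕ) : ZMod n) - c))
        = x - (m : ZMod n) * ((k : ℕ) : ZMod n) := by ring
    rw [this]
    exact h1
  · intro k₁ h₁ k₂ h₂ heq
    apply fin_cast_inj
    have := congrArg (fun r : ℕ => ((r : ZMod n) + c)) heq
    simpa [zmod_cast_val] using this
  · intro s hs
    rw [Finset.mem_filter, Finset.mem_range] at hs
    obtain ⟨hs1, hs2⟩ := hs
    refine ⟨⟨(c + (s : ℕ)).val, ZMod.val_lt _⟩, ?_, ?_⟩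
    · rw [Finset.mem_filter]
      refine ⟨Finset.mem_univ _, ?_, ?_⟩
      · show (x - (m : ZMod n) * ((((c + (s : ℕ)).val : ℕ)) : ZMod n)).val < m
        rw [zmod_cast_val]
        have : x - (m : ZMod n) * (c + (s : ℕ))
            = x - (m : ZMod n) * c - ((m * s : ℕ) : ZMod n) := by push_cast; ring
        rw [this]
        exact hs2
      · show (((((c + (s : ℕ)).val : ℕ)) : ZMod n) - c).val < m'
        rw [zmod_cast_val, add_sub_cancel_left, ZMod.val_cast_of_lt (by omega)]
        exact hs1
    · show ((((((c + (s : ℕ)).val : ℕ)) : ZMod n) - c)).val = s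
      rw [zmod_cast_val, add_sub_cancel_left, ZMod.val_cast_of_lt (by omega)]

lemma christoffel_mul {F : Type*} [Field F] {n m m' : ℕ} (hm : 1 ≤ m) (hmn : m < n)
    (hm'1 : 1 ≤ m') (hm'n : m' < n) (a b a' b' : F) :
    christoffel n m a b * christoffel n m' a' b' =
      christoffel n (m * m' % n)
        ((((a-b)*(a'-b')*((m*m'/n : ℕ) : F) + (a-b)*b'*m + b*(a'-b')*m' + n*(b*b')))
          + (a-b)*(a'-b'))
        ((a-b)*(a'-b')*((m*m'/n : ℕ) : F) + (a-b)*b'*m + b*(a'-b')*m' + n*(b*b')) := by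
  haveI : NeZero n := ⟨by omega⟩
  ext i j
  rw [Matrix.mul_apply]
  simp only [christoffel, Matrix.of_apply]
  set x : ZMod n := ((i : ℕ) : ZMod n) with hx
  set y : ZMod n := ((j : ℕ) : ZMod n) with hy
  have hterm : ∀ k : Fin n,
      (if (x - (m : ZMod n) * ((k : ℕ) : ZMod n)).val < m then a else b)
        * (if (((k : ℕ) : ZMod n) - (m' : ZMod n) * y).val < m' then a' else b')
      = b*b' + ((if (x - (m : ZMod n) * ((k : ℕ) : ZMod n)).val < m then (a-b)*b' else 0)
        + ((if (((k : ℕ) : ZMod n) - (m' : ZMod n) * y).val < m' then b*(a'-b') else 0)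
        + (if ((x - (m : ZMod n) * ((k : ℕ) : ZMod n)).val < m
              ∧ (((k : ℕ) : ZMod n) - (m' : ZMod n) * y).val < m')
            then (a-b)*(a'-b') else 0))) := by
    intro k
    by_cases h1 : (x - (m : ZMod n) * ((k : ℕ) : ZMod n)).val < m <;>
      by_cases h2 : (((k : ℕ) : ZMod n) - (m' : ZMod n) * y).val < m' <;>
      simp [h1, h2] <;> ring
  rw [Finset.sum_congr rfl fun k _ => hterm k]
  rw [Finset.sum_add_distrib, Finset.sum_add_distrib, Finset.sum_add_distrib]
  rw [Finset.sum_const, Finset.sum_ite, Finset.sum_const, Finset.sum_const_zero, add_zero,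
    Finset.sum_ite, Finset.sum_const, Finset.sum_const_zero, add_zero,
    Finset.sum_ite, Finset.sum_const, Finset.sum_const_zero, add_zero]
  rw [card_row hm hmn x, card_col hm'1 hm'n ((m' : ZMod n) * y),
    card_pq hm hmn hm'1 hm'n x ((m' : ZMod n) * y)]
  rw [Finset.card_univ, Fintype.card_fin]
  have hcond : ((((m * m' % n : ℕ)) : ZMod n) * y) = (m : ZMod n) * ((m' : ZMod n) * y) := by
    rw [ZMod.natCast_mod]
    push_cast
    ring
  rw [hcond]
  set u : ℕ := m * m' / n with hu
  simp only [smul_eq_mul, nsmul_eq_mul]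
  split_ifs with h
  · push_cast
    ring
  · push_cast
    ring

lemma christoffel_one_eq {R : Type*} (n : ℕ) (hn : 0 < n) (a b : R) :
    christoffel n 1 a b = Matrix.of fun i j : Fin n => if i = j then a else b := by
  haveI : NeZero n := ⟨by omega⟩
  ext i j
  simp only [christoffel, Matrix.of_apply, Nat.cast_one, one_mul, Nat.lt_one_iff]
  congr 1
  rw [ZMod.val_eq_zero, sub_eq_zero]
  exact propext ⟨fun h => fin_cast_inj h, fun h => by rw [h]⟩

lemma christoffel_one_val {F : Type*} [Field F] (n : ℕ) (hn : 0 < n) :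
    christoffel n 1 (1 : F) 0 = 1 := by
  rw [christoffel_one_eq n hn]
  ext i j
  simp [Matrix.one_apply]

lemma christoffel_row_sum {F : Type*} [Field F] {n m : ℕ} (hm : 1 ≤ m) (hmn : m < n)
    (a b : F) (i : Fin n) :
    ∑ j : Fin n, christoffel n m a b i j = (m : F) * (a - b) + (n : F) * b := by
  haveI : NeZero n := ⟨by omega⟩
  simp only [christoffel, Matrix.of_apply]
  have hterm : ∀ j : Fin n,
      (if ((((i:ℕ):ZMod n)) - (m : ZMod n) * ((j : ℕ) : ZMod n)).val < m then a else b)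
      = b + (if ((((i:ℕ):ZMod n)) - (m : ZMod n) * ((j : ℕ) : ZMod n)).val < m
          then a - b else 0) := by
    intro j; split_ifs <;> ring
  rw [Finset.sum_congr rfl fun j _ => hterm j, Finset.sum_add_distrib, Finset.sum_const,
    Finset.sum_ite, Finset.sum_const, Finset.sum_const_zero, add_zero,
    card_row hm hmn, Finset.card_univ, Fintype.card_fin]
  simp only [smul_eq_mul, nsmul_eq_mul]
  ring

lemma christoffel_entry_col0 {R : Type*} {n mm mi : ℕ} [NeZero n] (hmi : mi < n) (a b : R) :
    christoffel n mm a b ⟨mi, hmi⟩ ⟨0, lt_of_le_of_lt (Nat.zero_le _) hmi⟩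
      = if mi < mm then a else b := by
  show (if (((mi : ℕ) : ZMod n) - (mm : ZMod n) * (((0:ℕ)) : ZMod n)).val < mm then a else b) = _
  rw [Nat.cast_zero, mul_zero, sub_zero, ZMod.val_cast_of_lt hmi]

lemma christoffel_param_unique {R : Type*} {n m m' : ℕ} (hm : 1 ≤ m) (hmn : m < n)
    (hm' : 1 ≤ m') (hm'n : m' < n) {a b a' b' : R} (hab : a ≠ b) (hab' : a' ≠ b')
    (h : (christoffel n m a b : Matrix (Fin n) (Fin n) R) = christoffel n m' a' b') :
    m = m' ∧ a = a' ∧ b = b' := by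
  haveI : NeZero n := ⟨by omega⟩
  have hentry : ∀ (mi : ℕ) (hmi : mi < n),
      (if mi < m then a else b) = if mi < m' then a' else b' := by
    intro mi hmi
    rw [← christoffel_entry_col0 (mm := m) hmi a b,
      ← christoffel_entry_col0 (mm := m') hmi a' b', h]
  have haa : a = a' := by
    have := hentry 0 (by omega)
    rwa [if_pos (by omega), if_pos (by omega)] at this
  have hmeq : m = m' := by
    rcases lt_trichotomy m m' with hlt | heq | hgt
    · exfalso
      have := hentry m (by omega)
      rw [if_neg (lt_irrefl m), if_pos hlt] at this
      exact hab (haa.trans this.symm)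
    · exact heq
    · exfalso
      have := hentry m' (by omega)
      rw [if_pos hgt, if_neg (lt_irrefl m')] at this
      exact hab' (haa.symm.trans this)
  subst hmeq
  refine ⟨rfl, haa, ?_⟩
  have := hentry m (by omega)
  rwa [if_neg (lt_irrefl m), if_neg (lt_irrefl m)] at this

lemma coprime_mod_facts {m n : ℕ} (hn : 2 ≤ n) (h : Nat.Coprime m n) :
    Nat.Coprime (m % n) n ∧ 1 ≤ m % n ∧ m % n < n := by
  refine ⟨?_, ?_, Nat.mod_lt _ (by omega)⟩
  · show Nat.gcd (m % n) n = 1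
    rw [(Nat.gcd_rec n m).symm.trans rfl]
    rw [Nat.gcd_comm]
    exact h
  · rcases Nat.eq_zero_or_pos (m % n) with h0 | h1
    · exfalso
      have hd : n ∣ m := Nat.dvd_of_mod_eq_zero h0
      have hg := Nat.dvd_gcd hd (dvd_refl n)
      have h' : Nat.gcd m n = 1 := h
      rw [h'] at hg
      have := Nat.le_of_dvd one_pos hg
      omega
    · exact h1

lemma christoffel_inv {F : Type*} [Field F] {n m : ℕ} (hn : 2 ≤ n) (hm : 1 ≤ m) (hmn : m < n)
    (hcop : Nat.Coprime m n) {a b : F} (hab : a ≠ b)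
    (hS : (m : F) * (a - b) + (n : F) * b ≠ 0) :
    ∃ (m₂ : ℕ) (a₂ b₂ : F), 1 ≤ m₂ ∧ m₂ < n ∧ Nat.Coprime m₂ n ∧ a₂ ≠ b₂ ∧
      christoffel n m a b * christoffel n m₂ a₂ b₂ = 1 := by
  haveI : NeZero n := ⟨by omega⟩
  haveI : Fact (1 < n) := ⟨by omega⟩
  set w : (ZMod n)ˣ := ZMod.unitOfCoprime m hcop with hw
  set m₂ : ℕ := ((w⁻¹ : (ZMod n)ˣ) : ZMod n).val with hm₂
  have hm₂n : m₂ < n := ZMod.val_lt _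
  have hm₂cop : Nat.Coprime m₂ n := ZMod.val_coe_unit_coprime w⁻¹
  have hm₂1 : 1 ≤ m₂ := by
    rcases Nat.eq_zero_or_pos m₂ with h0 | h1
    · exfalso
      apply Units.ne_zero w⁻¹
      rw [← zmod_cast_val ((w⁻¹ : (ZMod n)ˣ) : ZMod n), ← hm₂, h0, Nat.cast_zero]
    · exact h1
  have hmm₂ : m * m₂ % n = 1 := by
    have hcast : ((m * m₂ : ℕ) : ZMod n) = 1 := by
      push_cast
      rw [hm₂, ZMod.natCast_val, ZMod.cast_id]
      have h5 : (m : ZMod n) = (w : ZMod n) := (ZMod.coe_unitOfCoprime m hcop).symm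
      rw [h5, ← Units.val_mul, mul_inv_cancel, Units.val_one]
    calc m * m₂ % n = ((m*m₂ : ℕ) : ZMod n).val := (ZMod.val_natCast _ _).symm
      _ = 1 := by rw [hcast, ZMod.val_one]
  set d : F := a - b with hdd
  have hd : d ≠ 0 := sub_ne_zero.mpr hab
  set S : F := (m : F) * (a - b) + (n : F) * b with hSS
  set b₂ : F := -(d*d⁻¹*((m*m₂/n : ℕ) : F) + b*d⁻¹*m₂)/S with hb₂
  set a₂ : F := b₂ + d⁻¹ with ha₂
  have hab₂ : a₂ ≠ b₂ := by
    rw [ha₂]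
    intro hh
    exact inv_ne_zero hd (by rwa [add_eq_left] at hh)
  refine ⟨m₂, a₂, b₂, hm₂1, hm₂n, hm₂cop, hab₂, ?_⟩
  rw [christoffel_mul hm hmn hm₂1 hm₂n a b a₂ b₂, hmm₂]
  have hd₂ : a₂ - b₂ = d⁻¹ := by rw [ha₂]; ring
  have hB : (a-b)*(a₂-b₂)*((m*m₂/n : ℕ) : F) + (a-b)*b₂*m + b*(a₂-b₂)*m₂ + n*(b*b₂) = 0 := by
    rw [hd₂, ← hdd, hb₂]
    field_simp
    ring
  have h1 : (a-b)*(a₂-b₂) = 1 := by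
    rw [hd₂, ← hdd]
    exact mul_inv_cancel₀ hd
  rw [hB, zero_add, h1]
  exact christoffel_one_val n (by omega)

lemma isChristoffel_choose_spec {R : Type*} {n : ℕ} {M : Matrix (Fin n) (Fin n) R}
    (h : IsChristoffel n M) :
    1 ≤ h.choose ∧ h.choose < n ∧ Nat.Coprime h.choose n ∧
      ∃ a b : R, a ≠ b ∧ M = christoffel n h.choose a b := by
  obtain ⟨a, b, h1, h2, h3, h4, h5⟩ := h.choose_spec
  exact ⟨h1, h2, h3, a, b, h4, h5⟩

lemma isChristoffel_choose_eq {R : Type*} {n : ℕ} {M : Matrix (Fin n) (Fin n) R}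
    (h : IsChristoffel n M) {m : ℕ} {a b : R} (hm1 : 1 ≤ m) (hmn : m < n) (hab : a ≠ b)
    (hM : M = christoffel n m a b) : h.choose = m := by
  obtain ⟨h1, h2, h3, a₀, b₀, h4, h5⟩ := isChristoffel_choose_spec h
  exact (christoffel_param_unique h1 h2 hm1 hmn h4 hab (h5.symm.trans hM)).1

end Aux

theorem christoffel_type_hom (F : Type*) [Field F] (n : ℕ) (hn : 2 ≤ n) :
    ∃ G : Subgroup (GL (Fin n) F),
      (∀ A : GL (Fin n) F, A ∈ G ↔ IsChristoffel n (↑A : Matrix (Fin n) (Fin n) F)) ∧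
      ∃ f : G →* (ZMod n)ˣ,
        Function.Surjective f ∧
        (∀ (A : G) (m : ℕ) (a b : F), 1 ≤ m → m < n → Nat.Coprime m n → a ≠ b →
          (((A : GL (Fin n) F) : Matrix (Fin n) (Fin n) F)) = christoffel n m a b →
          ((f A : (ZMod n)ˣ) : ZMod n) = (m : ZMod n)) ∧
        (∀ A : G, f A = 1 ↔ ∃ a b : F, a ≠ b ∧
          IsUnit ((((A : GL (Fin n) F) : Matrix (Fin n) (Fin n) F))) ∧
          (((A : GL (Fin n) F) : Matrix (Fin n) (Fin n) F)) = Matrix.of fun i j => if i = j then a else b) ∧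
        Nonempty ((G ⧸ f.ker) ≃* (ZMod n)ˣ) := by
  classical
  haveI : NeZero n := ⟨by omega⟩
  haveI : Fact (1 < n) := ⟨by omega⟩
  -- closure under multiplication
  have hmul : ∀ M N : Matrix (Fin n) (Fin n) F, IsChristoffel n M → IsChristoffel n N →
      IsChristoffel n (M * N) := by
    rintro M N ⟨m, a, b, hm1, hmn, hcop, hab, rfl⟩ ⟨m', a', b', hm'1, hm'n, hcop', hab', rfl⟩
    obtain ⟨hc, h1, h2⟩ := coprime_mod_facts hn (Nat.Coprime.mul hcop hcop')
    refine ⟨m * m' % n, _, _, h1, h2, hc, ?_, christoffel_mul hm1 hmn hm'1 hm'n a b a' b'⟩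
    have hne : (a-b)*(a'-b') ≠ 0 :=
      mul_ne_zero (sub_ne_zero.mpr hab) (sub_ne_zero.mpr hab')
    intro hcon
    exact hne (by rwa [add_eq_left] at hcon)
  -- the subgroup
  let G : Subgroup (GL (Fin n) F) :=
  { carrier := {A : GL (Fin n) F | IsChristoffel n (↑A : Matrix (Fin n) (Fin n) F)}
    mul_mem' := fun {A B} hA hB => by
      show IsChristoffel n (↑(A * B) : Matrix (Fin n) (Fin n) F)
      rw [Units.val_mul]
      exact hmul _ _ hA hB
    one_mem' := by
      show IsChristoffel n (↑(1 : GL (Fin n) F) : Matrix (Fin n) (Fin n) F)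
      rw [Units.val_one]
      exact ⟨1, 1, 0, le_refl 1, by omega, Nat.coprime_one_left n, one_ne_zero,
        (christoffel_one_val n (by omega)).symm⟩
    inv_mem' := fun {A} hA => by
      obtain ⟨m, a, b, hm1, hmn, hcop, hab, hM⟩ := hA
      have hS : (m : F) * (a - b) + (n : F) * b ≠ 0 := by
        intro h0
        have hmv : (↑A : Matrix (Fin n) (Fin n) F).mulVec (fun _ => 1) = 0 := by
          funext i
          show ∑ j, (↑A : Matrix (Fin n) (Fin n) F) i j * 1 = 0
          simp only [mul_one]
          rw [hM, christoffel_row_sum hm1 hmn, h0]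
        have hcontr : (fun _ => (1:F) : Fin n → F) = 0 := by
          have e1 : (↑(A⁻¹) : Matrix (Fin n) (Fin n) F).mulVec
              ((↑A : Matrix (Fin n) (Fin n) F).mulVec (fun _ => 1)) = (fun _ => 1) := by
            rw [Matrix.mulVec_mulVec, Units.inv_mul, Matrix.one_mulVec]
          rw [hmv, Matrix.mulVec_zero] at e1
          exact e1.symm
        have := congrFun hcontr ⟨0, by omega⟩
        simpa using this
      obtain ⟨m₂, a₂, b₂, h1, h2, h3, h4, hprod⟩ := christoffel_inv hn hm1 hmn hcop hab hS
      rw [← hM] at hprod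
      refine ⟨m₂, a₂, b₂, h1, h2, h3, h4, ?_⟩
      show (↑(A⁻¹) : Matrix (Fin n) (Fin n) F) = _
      calc (↑(A⁻¹) : Matrix (Fin n) (Fin n) F)
          = ↑(A⁻¹) * ((↑A : Matrix (Fin n) (Fin n) F) * christoffel n m₂ a₂ b₂) := by
            rw [hprod, mul_one]
        _ = (↑(A⁻¹) * (↑A : Matrix (Fin n) (Fin n) F)) * christoffel n m₂ a₂ b₂ := by
            rw [mul_assoc]
        _ = christoffel n m₂ a₂ b₂ := by rw [Units.inv_mul, one_mul] }
  have hmem : ∀ A : ↥G, IsChristoffel n ((A : GL (Fin n) F) : Matrix (Fin n) (Fin n) F) :=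
    fun A => A.2
  -- the homomorphism
  let f : ↥G →* (ZMod n)ˣ := MonoidHom.mk'
    (fun A => ZMod.unitOfCoprime (hmem A).choose (isChristoffel_choose_spec (hmem A)).2.2.1)
    (by
      intro A B
      apply Units.ext
      rw [Units.val_mul]
      simp only [ZMod.coe_unitOfCoprime]
      obtain ⟨hA1, hA2, hA3, a, b, hab, hMA⟩ := isChristoffel_choose_spec (hmem A)
      obtain ⟨hB1, hB2, hB3, a', b', hab', hMB⟩ := isChristoffel_choose_spec (hmem B)
      have e0 : ((↑(A * B) : GL (Fin n) F) : Matrix (Fin n) (Fin n) F)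
          = ((↑A : GL (Fin n) F) : Matrix (Fin n) (Fin n) F)
            * ((↑B : GL (Fin n) F) : Matrix (Fin n) (Fin n) F) := rfl
      have hABmat : ((↑(A * B) : GL (Fin n) F) : Matrix (Fin n) (Fin n) F)
          = christoffel n ((hmem A).choose * (hmem B).choose % n)
            ((((a-b)*(a'-b')*(((hmem A).choose*(hmem B).choose/n : ℕ) : F)
              + (a-b)*b'*(hmem A).choose + b*(a'-b')*(hmem B).choose + n*(b*b')))
              + (a-b)*(a'-b'))
            ((a-b)*(a'-b')*(((hmem A).choose*(hmem B).choose/n : ℕ) : F)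
              + (a-b)*b'*(hmem A).choose + b*(a'-b')*(hmem B).choose + n*(b*b')) :=
        (e0.trans (congrArg₂ (· * ·) hMA hMB)).trans
          (christoffel_mul hA1 hA2 hB1 hB2 a b a' b')
      obtain ⟨hc, hv1, hv2⟩ := coprime_mod_facts hn (Nat.Coprime.mul hA3 hB3)
      have hne : ((((a-b)*(a'-b')*(((hmem A).choose*(hmem B).choose/n : ℕ) : F)
              + (a-b)*b'*(hmem A).choose + b*(a'-b')*(hmem B).choose + n*(b*b')))
              + (a-b)*(a'-b'))
          ≠ ((a-b)*(a'-b')*(((hmem A).choose*(hmem B).choose/n : ℕ) : F)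
              + (a-b)*b'*(hmem A).choose + b*(a'-b')*(hmem B).choose + n*(b*b')) := by
        have hne0 : (a-b)*(a'-b') ≠ 0 :=
          mul_ne_zero (sub_ne_zero.mpr hab) (sub_ne_zero.mpr hab')
        intro hcon
        exact hne0 (by rwa [add_eq_left] at hcon)
      have := isChristoffel_choose_eq (hmem (A * B)) hv1 hv2 hne hABmat
      rw [this, ZMod.natCast_mod, Nat.cast_mul])
  have hsurj : Function.Surjective f := by
    intro w
    set m : ℕ := ((w : ZMod n)).val with hmdef
    have hmn : m < n := ZMod.val_lt _
    have hcop : Nat.Coprime m n := ZMod.val_coe_unit_coprime w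
    have hm1 : 1 ≤ m := by
      rcases Nat.eq_zero_or_pos m with h0 | h1
      · exfalso
        apply Units.ne_zero w
        rw [← zmod_cast_val ((w : (ZMod n)ˣ) : ZMod n), ← hmdef, h0, Nat.cast_zero]
      · exact h1
    obtain ⟨a, b, hab, hS⟩ : ∃ a b : F, a ≠ b ∧ (m : F) * (a - b) + (n : F) * b ≠ 0 := by
      by_cases hmF : (m : F) = 0
      · refine ⟨0, 1, by norm_num, ?_⟩
        have hnF : (n : F) ≠ 0 := by
          intro hnF
          haveI := ringChar.charP F
          have h1 : ringChar F ∣ m := (CharP.cast_eq_zero_iff F (ringChar F) m).mp hmF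
          have h2 : ringChar F ∣ n := (CharP.cast_eq_zero_iff F (ringChar F) n).mp hnF
          have h3 : ringChar F ∣ Nat.gcd m n := Nat.dvd_gcd h1 h2
          have h4 : Nat.gcd m n = 1 := hcop
          rw [h4] at h3
          have h5 : ringChar F = 1 := Nat.dvd_one.mp h3
          have h6 : (1 : F) = 0 := by
            have := (CharP.cast_eq_zero_iff F (ringChar F) 1).mpr (by simp [h5])
            simpa using this
          exact one_ne_zero h6
        intro hcon
        apply hnF
        rw [hmF] at hcon
        simpa using hcon
      · refine ⟨1, 0, one_ne_zero, ?_⟩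
        intro hcon
        apply hmF
        simpa using hcon
    obtain ⟨m₂, a₂, b₂, h1, h2, h3, h4, hprod⟩ := christoffel_inv hn hm1 hmn hcop hab hS
    have hNM : christoffel n m₂ a₂ b₂ * christoffel n m a b = 1 :=
      mul_eq_one_comm.mp hprod
    let A : GL (Fin n) F := ⟨christoffel n m a b, christoffel n m₂ a₂ b₂, hprod, hNM⟩
    have hAG : A ∈ G := ⟨m, a, b, hm1, hmn, hcop, hab, rfl⟩
    refine ⟨⟨A, hAG⟩, ?_⟩
    apply Units.ext
    have hch : (hmem ⟨A, hAG⟩).choose = m :=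
      isChristoffel_choose_eq (hmem ⟨A, hAG⟩) hm1 hmn hab rfl
    show (((hmem ⟨A, hAG⟩).choose : ℕ) : ZMod n) = (w : ZMod n)
    rw [hch, hmdef, zmod_cast_val]
  refine ⟨G, fun A => Iff.rfl, f, hsurj, ?_, ?_,
    ⟨QuotientGroup.quotientKerEquivOfSurjective f hsurj⟩⟩
  · -- value of f
    intro A m a b hm1 hmn hcop hab hM
    have hch : (hmem A).choose = m := isChristoffel_choose_eq (hmem A) hm1 hmn hab hM
    show (((hmem A).choose : ℕ) : ZMod n) = (m : ZMod n)
    rw [hch]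
  · -- kernel description
    intro A
    constructor
    · intro hfA
      have hval : (((hmem A).choose : ℕ) : ZMod n) = 1 := congrArg Units.val hfA
      have hch1 : (hmem A).choose = 1 := by
        have h7 := congrArg ZMod.val hval
        rwa [ZMod.val_cast_of_lt (isChristoffel_choose_spec (hmem A)).2.1,
          ZMod.val_one] at h7
      obtain ⟨h1, h2, h3, a, b, hab, hM⟩ := isChristoffel_choose_spec (hmem A)
      rw [hch1] at hM
      refine ⟨a, b, hab, (A : GL (Fin n) F).isUnit, ?_⟩
      rw [hM, christoffel_one_eq n (by omega)]
    · rintro ⟨a, b, hab, -, hM⟩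
      have hM' : ((A : GL (Fin n) F) : Matrix (Fin n) (Fin n) F) = christoffel n 1 a b := by
        rw [hM, christoffel_one_eq n (by omega)]
      have hch : (hmem A).choose = 1 :=
        isChristoffel_choose_eq (hmem A) (le_refl 1) (by omega) hab hM'
      apply Units.ext
      show (((hmem A).choose : ℕ) : ZMod n) = ((1 : (ZMod n)ˣ) : ZMod n)
      rw [hch, Units.val_one, Nat.cast_one]
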